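/- Let n ≥ 1, d ≥ 2 and k ∈ {1,…,d−1} be integers, let p₁,…,pₙ ∈ ℝ^d, and let t > 0. Define G_t and the domain D as follows: G_t(X,y) := t·∑_{i=1}^n yᵢ − ∑_{i=1}^n ln(yᵢ² − ‖X pᵢ‖₂²) − ln det(X) − ln det(I_d − X), and D is the set of pairs (X,y) with X ∈ ℝ^{d×d} symmetric, trace(X) = d−k, 0 ≺ X ≺ I_d, and ‖X pᵢ‖₂ < yᵢ for every i. Let X₀ := ((d−k)/d)·I_d and let y₀ ∈ ℝ^n have entries (y₀)ᵢ := √(‖X₀ pᵢ‖₂² + e). Then (X₀, y₀) ∈ D and G_t(X₀, y₀) = t·∑_{i=1}^n (y₀)ᵢ − n + d·ln(d²/(k(d−k))) ≤ t·∑_{i=1}^n (y₀)ᵢ − n + 2d·ln d. -/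

import Mathlib

open Matrix

/-- The Euclidean (ℓ₂) norm of a vector in ℝ^d. -/
noncomputable def l2norm {d : ℕ} (u : Fin d → ℝ) : ℝ := Real.sqrt (∑ j, (u j) ^ 2)

/-- The barrier objective
`G_t(X,y) = t·∑ᵢ yᵢ − ∑ᵢ ln(yᵢ² − ‖X pᵢ‖₂²) − ln det X − ln det (I − X)`. -/
noncomputable def barrierG {n d : ℕ} (p : Fin n → Fin d → ℝ) (t : ℝ)
    (X : Matrix (Fin d) (Fin d) ℝ) (y : Fin n → ℝ) : ℝ :=
  t * ∑ i, y i - ∑ i, Real.log ((y i) ^ 2 - (l2norm (X.mulVec (p i))) ^ 2)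
    - Real.log X.det - Real.log (1 - X).det

/-- The domain `D` of the barrier problem: `X` symmetric with `trace X = d − k`,
`0 ≺ X ≺ I`, and `‖X pᵢ‖₂ < yᵢ` for every `i`. -/
def barrierDom {n d : ℕ} (k : ℕ) (p : Fin n → Fin d → ℝ)
    (X : Matrix (Fin d) (Fin d) ℝ) (y : Fin n → ℝ) : Prop :=
  Xᵀ = X ∧ X.trace = ((d - k : ℕ) : ℝ) ∧ X.PosDef ∧ (1 - X).PosDef ∧
    ∀ i, l2norm (X.mulVec (p i)) < y i

/-- With `X₀ := ((d−k)/d)·I` and `(y₀)ᵢ := √(‖X₀ pᵢ‖₂² + e)`, the pair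
`(X₀, y₀)` belongs to the domain `D` and
`G_t(X₀,y₀) = t·∑ᵢ (y₀)ᵢ − n + d·ln(d²/(k(d−k))) ≤ t·∑ᵢ (y₀)ᵢ − n + 2d·ln d`. -/
theorem stmt_15 (n d k : ℕ) (hn : 1 ≤ n) (hd : 2 ≤ d) (hk1 : 1 ≤ k) (hk2 : k ≤ d - 1)
    (p : Fin n → Fin d → ℝ) (t : ℝ) (ht : 0 < t)
    (X₀ : Matrix (Fin d) (Fin d) ℝ)
    (hX₀ : X₀ = (((d : ℝ) - k) / d) • (1 : Matrix (Fin d) (Fin d) ℝ))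
    (y₀ : Fin n → ℝ)
    (hy₀ : ∀ i, y₀ i = Real.sqrt ((l2norm (X₀.mulVec (p i))) ^ 2 + Real.exp 1)) :
    barrierDom k p X₀ y₀ ∧
    barrierG p t X₀ y₀
      = t * ∑ i, y₀ i - (n : ℝ)
        + (d : ℝ) * Real.log ((d : ℝ) ^ 2 / (k * ((d : ℝ) - k))) ∧
    barrierG p t X₀ y₀
      ≤ t * ∑ i, y₀ i - (n : ℝ) + 2 * (d : ℝ) * Real.log d := by
  have hkd : k < d := by omega
  have hdR : (0 : ℝ) < d := by positivity
  have hkR : (0 : ℝ) < k := by exact_mod_cast hk1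
  have hdk : (0 : ℝ) < (d : ℝ) - k := by
    have : (k : ℝ) < d := by exact_mod_cast hkd
    linarith
  set c : ℝ := ((d : ℝ) - k) / d with hc
  have hc0 : 0 < c := by positivity
  have hc1 : c < 1 := by
    rw [hc, div_lt_one hdR]; linarith
  have h1c : 0 < 1 - c := by linarith
  -- key: 1 - X₀ = (1-c) • 1
  have hsub : (1 : Matrix (Fin d) (Fin d) ℝ) - X₀ = (1 - c) • 1 := by
    rw [hX₀, sub_smul, one_smul]
  -- l2norm nonneg
  have hl2 : ∀ u : Fin d → ℝ, 0 ≤ l2norm u := fun u => Real.sqrt_nonneg _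
  have hlt : ∀ i, l2norm (X₀.mulVec (p i)) < y₀ i := by
    intro i
    rw [hy₀ i]
    have h := hl2 (X₀.mulVec (p i))
    calc l2norm (X₀.mulVec (p i)) = Real.sqrt ((l2norm (X₀.mulVec (p i))) ^ 2) := by
          rw [Real.sqrt_sq h]
      _ < Real.sqrt ((l2norm (X₀.mulVec (p i))) ^ 2 + Real.exp 1) := by
          apply Real.sqrt_lt_sqrt (by positivity)
          have := Real.exp_pos 1; linarith
  have hdom : barrierDom k p X₀ y₀ := by
    refine ⟨?_, ?_, ?_, ?_, hlt⟩
    · rw [hX₀, transpose_smul, transpose_one]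
    · rw [hX₀, trace_smul, trace_one]
      have : ((d - k : ℕ) : ℝ) = (d : ℝ) - k := by
        push_cast [Nat.cast_sub hkd.le]; ring
      rw [this, Fintype.card_fin, smul_eq_mul, hc]
      field_simp
    · rw [hX₀, Matrix.smul_one_eq_diagonal]
      exact Matrix.posDef_diagonal_iff.mpr fun _ => hc0
    · rw [hsub, Matrix.smul_one_eq_diagonal]
      exact Matrix.posDef_diagonal_iff.mpr fun _ => h1c
  -- determinants
  have hdetX : X₀.det = c ^ d := by
    rw [hX₀, Matrix.smul_one_eq_diagonal, det_diagonal]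
    simp
  have hdet1X : (1 - X₀).det = (1 - c) ^ d := by
    rw [hsub, Matrix.smul_one_eq_diagonal, det_diagonal]
    simp
  -- each log term is 1
  have hlog : ∀ i, Real.log ((y₀ i) ^ 2 - (l2norm (X₀.mulVec (p i))) ^ 2) = 1 := by
    intro i
    rw [hy₀ i, Real.sq_sqrt (by positivity)]
    simp [Real.log_exp]
  have hEq : barrierG p t X₀ y₀
      = t * ∑ i, y₀ i - (n : ℝ)
        + (d : ℝ) * Real.log ((d : ℝ) ^ 2 / (k * ((d : ℝ) - k))) := by
    unfold barrierG
    rw [hdetX, hdet1X]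
    simp only [hlog, Finset.sum_const, Finset.card_univ, Fintype.card_fin, smul_eq_mul, mul_one]
    rw [Real.log_pow, Real.log_pow]
    have key : Real.log ((d : ℝ) ^ 2 / (k * ((d : ℝ) - k))) = -Real.log c - Real.log (1 - c) := by
      have h1c' : (1 : ℝ) - c = k / d := by
        rw [hc]; field_simp; ring
      have harg : (d : ℝ) ^ 2 / (k * ((d : ℝ) - k)) = (c * (1 - c))⁻¹ := by
        rw [h1c', hc]; field_simp
      rw [harg, Real.log_inv, Real.log_mul hc0.ne' h1c.ne']
      ring
    rw [key]
    ring
  refine ⟨hdom, hEq, ?_⟩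
  rw [hEq]
  have hkk : (1 : ℝ) ≤ (k : ℝ) * ((d : ℝ) - k) := by
    have h1 : (1 : ℝ) ≤ (k : ℝ) := by exact_mod_cast hk1
    have h2 : (1 : ℝ) ≤ (d : ℝ) - k := by
      have : (k : ℝ) + 1 ≤ d := by exact_mod_cast hkd
      linarith
    nlinarith
  have hle : Real.log ((d : ℝ) ^ 2 / (k * ((d : ℝ) - k))) ≤ Real.log ((d : ℝ) ^ 2) := by
    apply Real.log_le_log (by positivity)
    rw [div_le_iff₀ (by positivity)]
    nlinarith [sq_nonneg (d : ℝ)]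
  have hlog2 : Real.log ((d : ℝ) ^ 2) = 2 * Real.log d := by
    rw [Real.log_pow]; push_cast; ring
  nlinarith [hle, hlog2]
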